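/- Let 0 < θ_1 < θ_2 < π, set (z_1, z_2, z_3, z_4) = (e^{iθ_1}, e^{iθ_2}, e^{i(2π−θ_2)}, e^{i(2π−θ_1)}), and let B_1 be the set of the four vectors β ∈ {−1/2, +1/2}^4 with β_1 + β_2 + β_3 + β_4 = 1. Then for every N ∈ ℕ: Σ_{β ∈ B_1} exp(iN(θ_1(β_1 − β_4) + θ_2(β_2 − β_3))) · ∏_{1 ≤ j < k ≤ 4} |z_j − z_k|^{2 β_j β_k} = √(sin θ_2 / sin θ_1) · 2cos(N θ_1) + √(sin θ_1 / sin θ_2) · 2cos(N θ_2). In particular the sum over the four minimal Fisher–Hartwig representations is real. -/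

import Mathlib

/-!
Evaluation of the sum over the four minimal Fisher–Hartwig representations arising in
the asymptotics of the `⟨σ^x_0 σ^x_N⟩` correlator of a chain with two Fermi points
`θ_1, θ_2`; in particular the sum is real.
-/

noncomputable section
open scoped Classical

/-- `β`-value `+1/2` or `−1/2` encoded by a Boolean. -/
def bhalf (b : Bool) : ℝ := if b then 1/2 else -(1/2)

/-- The four jump points `(z_1, z_2, z_3, z_4) =
(e^{iθ_1}, e^{iθ_2}, e^{i(2π−θ_2)}, e^{i(2π−θ_1)})`. -/
def z4 (θ1 θ2 : ℝ) : Fin 4 → ℂ :=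
  ![Complex.exp (Complex.I * (θ1 : ℂ)), Complex.exp (Complex.I * (θ2 : ℂ)),
    Complex.exp (Complex.I * ((2 * Real.pi - θ2 : ℝ) : ℂ)),
    Complex.exp (Complex.I * ((2 * Real.pi - θ1 : ℝ) : ℂ))]

/- ## Auxiliary lemmas -/

lemma FH_abs_exp_sub_exp (a b : ℝ) :
    ‖Complex.exp (Complex.I * a) - Complex.exp (Complex.I * b)‖
    = 2 * |Real.sin ((a - b)/2)| := by
  have key : Complex.exp (Complex.I * a) - Complex.exp (Complex.I * b)
      = Complex.exp (Complex.I * ((a+b)/2 : ℂ)) * (2 * Complex.I * Complex.sin (((a-b)/2 : ℂ))) := by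
    rw [Complex.sin]
    have h1 : Complex.I * (a:ℂ) = Complex.I*((a+b)/2 : ℂ) + ((a-b)/2 : ℂ)*Complex.I := by ring
    have h2 : Complex.I * (b:ℂ) = Complex.I*((a+b)/2 : ℂ) + -(((a-b)/2 : ℂ))*Complex.I := by ring
    rw [h1, h2, Complex.exp_add, Complex.exp_add]
    ring_nf
    rw [Complex.I_sq]
    ring
  rw [key, norm_mul, norm_mul, norm_mul,
    show ((a : ℂ) - b)/2 = (((a - b)/2 : ℝ) : ℂ) by push_cast; ring,
    ← Complex.ofReal_sin, Complex.norm_real]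
  simp [Complex.norm_exp]

lemma FH_pair_cancel {x : ℝ} (hx : 0 < x) : x ^ (-(1/2) : ℝ) * x ^ ((1/2) : ℝ) = 1 := by
  rw [← Real.rpow_add hx]; norm_num

lemma FH_pair_div {a b : ℝ} (ha : 0 < a) (hb : 0 < b) :
    (2*a) ^ (-(1/2) : ℝ) * (2*b) ^ ((1/2) : ℝ) = Real.sqrt (b/a) := by
  rw [Real.rpow_neg (by positivity), inv_mul_eq_div, ← Real.div_rpow (by positivity) (by positivity),
    show (2*b)/(2*a) = b/a by field_simp, Real.sqrt_eq_rpow]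

lemma FH_prod_case0 {x y a b : ℝ} (hx : 0 < x) (hy : 0 < y) (ha : 0 < a) (hb : 0 < b) :
    (2*x) ^ (-(1/2) : ℝ) * (2*y) ^ (-(1/2) : ℝ) * (2*a) ^ (-(1/2) : ℝ)
      * (2*b) ^ ((1/2) : ℝ) * (2*y) ^ ((1/2) : ℝ) * (2*x) ^ ((1/2) : ℝ)
    = Real.sqrt (b/a) := by
  rw [show (2*x) ^ (-(1/2) : ℝ) * (2*y) ^ (-(1/2) : ℝ) * (2*a) ^ (-(1/2) : ℝ)
      * (2*b) ^ ((1/2) : ℝ) * (2*y) ^ ((1/2) : ℝ) * (2*x) ^ ((1/2) : ℝ)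
    = ((2*x) ^ (-(1/2) : ℝ) * (2*x) ^ ((1/2) : ℝ)) * ((2*y) ^ (-(1/2) : ℝ) * (2*y) ^ ((1/2) : ℝ))
      * ((2*a) ^ (-(1/2) : ℝ) * (2*b) ^ ((1/2) : ℝ)) by ring,
    FH_pair_cancel (by positivity), FH_pair_cancel (by positivity), FH_pair_div ha hb]
  ring

lemma FH_prod_case1 {x y a b : ℝ} (hx : 0 < x) (hy : 0 < y) (ha : 0 < a) (hb : 0 < b) :
    (2*x) ^ (-(1/2) : ℝ) * (2*y) ^ ((1/2) : ℝ) * (2*a) ^ ((1/2) : ℝ)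
      * (2*b) ^ (-(1/2) : ℝ) * (2*y) ^ (-(1/2) : ℝ) * (2*x) ^ ((1/2) : ℝ)
    = Real.sqrt (a/b) := by
  rw [show (2*x) ^ (-(1/2) : ℝ) * (2*y) ^ ((1/2) : ℝ) * (2*a) ^ ((1/2) : ℝ)
      * (2*b) ^ (-(1/2) : ℝ) * (2*y) ^ (-(1/2) : ℝ) * (2*x) ^ ((1/2) : ℝ)
    = ((2*x) ^ (-(1/2) : ℝ) * (2*x) ^ ((1/2) : ℝ)) * ((2*y) ^ (-(1/2) : ℝ) * (2*y) ^ ((1/2) : ℝ))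
      * ((2*b) ^ (-(1/2) : ℝ) * (2*a) ^ ((1/2) : ℝ)) by ring,
    FH_pair_cancel (by positivity), FH_pair_cancel (by positivity), FH_pair_div hb ha]
  ring

lemma FH_prod_case2 {x y a b : ℝ} (hx : 0 < x) (hy : 0 < y) (ha : 0 < a) (hb : 0 < b) :
    (2*x) ^ ((1/2) : ℝ) * (2*y) ^ (-(1/2) : ℝ) * (2*a) ^ ((1/2) : ℝ)
      * (2*b) ^ (-(1/2) : ℝ) * (2*y) ^ ((1/2) : ℝ) * (2*x) ^ (-(1/2) : ℝ)
    = Real.sqrt (a/b) := by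
  rw [show (2*x) ^ ((1/2) : ℝ) * (2*y) ^ (-(1/2) : ℝ) * (2*a) ^ ((1/2) : ℝ)
      * (2*b) ^ (-(1/2) : ℝ) * (2*y) ^ ((1/2) : ℝ) * (2*x) ^ (-(1/2) : ℝ)
    = ((2*x) ^ (-(1/2) : ℝ) * (2*x) ^ ((1/2) : ℝ)) * ((2*y) ^ (-(1/2) : ℝ) * (2*y) ^ ((1/2) : ℝ))
      * ((2*b) ^ (-(1/2) : ℝ) * (2*a) ^ ((1/2) : ℝ)) by ring,
    FH_pair_cancel (by positivity), FH_pair_cancel (by positivity), FH_pair_div hb ha]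
  ring

lemma FH_prod_case3 {x y a b : ℝ} (hx : 0 < x) (hy : 0 < y) (ha : 0 < a) (hb : 0 < b) :
    (2*x) ^ ((1/2) : ℝ) * (2*y) ^ ((1/2) : ℝ) * (2*a) ^ (-(1/2) : ℝ)
      * (2*b) ^ ((1/2) : ℝ) * (2*y) ^ (-(1/2) : ℝ) * (2*x) ^ (-(1/2) : ℝ)
    = Real.sqrt (b/a) := by
  rw [show (2*x) ^ ((1/2) : ℝ) * (2*y) ^ ((1/2) : ℝ) * (2*a) ^ (-(1/2) : ℝ)
      * (2*b) ^ ((1/2) : ℝ) * (2*y) ^ (-(1/2) : ℝ) * (2*x) ^ (-(1/2) : ℝ)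
    = ((2*x) ^ (-(1/2) : ℝ) * (2*x) ^ ((1/2) : ℝ)) * ((2*y) ^ (-(1/2) : ℝ) * (2*y) ^ ((1/2) : ℝ))
      * ((2*a) ^ (-(1/2) : ℝ) * (2*b) ^ ((1/2) : ℝ)) by ring,
    FH_pair_cancel (by positivity), FH_pair_cancel (by positivity), FH_pair_div ha hb]
  ring

lemma FH_funext_fin4 (σ τ : Fin 4 → Bool) :
    σ = τ ↔ σ 0 = τ 0 ∧ σ 1 = τ 1 ∧ σ 2 = τ 2 ∧ σ 3 = τ 3 :=
  ⟨fun h => by subst h; simp, fun ⟨a,b,c,d⟩ => funext fun j => by fin_cases j <;> assumption⟩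

lemma FH_filter_eq : Finset.univ.filter (fun σ : Fin 4 → Bool => ∑ j, bhalf (σ j) = 1)
    = {![false,true,true,true], ![true,false,true,true],
       ![true,true,false,true], ![true,true,true,false]} := by
  ext σ
  simp only [Finset.mem_filter, Finset.mem_univ, true_and, Finset.mem_insert, Finset.mem_singleton]
  cases h0 : σ 0 <;> cases h1 : σ 1 <;> cases h2 : σ 2 <;> cases h3 : σ 3 <;>
    simp [Fin.sum_univ_four, h0, h1, h2, h3, bhalf, FH_funext_fin4] <;> norm_num

lemma FH_exp_pair (y : ℝ) :
    Complex.exp (Complex.I * (y:ℂ)) + Complex.exp (Complex.I * ((-y : ℝ):ℂ)) =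
      ((2 * Real.cos y : ℝ) : ℂ) := by
  push_cast
  rw [show Complex.I * (y:ℂ) = (y:ℂ)*Complex.I by ring,
    show Complex.I * (-(y:ℂ)) = (-(y:ℂ))*Complex.I by ring,
    Complex.exp_mul_I, Complex.exp_mul_I, Complex.cos_neg, Complex.sin_neg,
    ← Complex.ofReal_cos]
  ring

theorem minimal_FH_representations_sum (θ1 θ2 : ℝ)
    (h1 : 0 < θ1) (h12 : θ1 < θ2) (h2 : θ2 < Real.pi) (N : ℕ) :
    ∑ σ ∈ Finset.univ.filter (fun σ : Fin 4 → Bool => ∑ j, bhalf (σ j) = 1),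
        Complex.exp (Complex.I * (N : ℂ) *
            ((θ1 * (bhalf (σ 0) - bhalf (σ 3)) + θ2 * (bhalf (σ 1) - bhalf (σ 2)) : ℝ) : ℂ))
          * ((∏ j : Fin 4, ∏ k : Fin 4,
              if j < k then
                ‖z4 θ1 θ2 j - z4 θ1 θ2 k‖ ^ (2 * bhalf (σ j) * bhalf (σ k))
              else 1 : ℝ) : ℂ)
      = ((Real.sqrt (Real.sin θ2 / Real.sin θ1) * (2 * Real.cos ((N : ℝ) * θ1))
          + Real.sqrt (Real.sin θ1 / Real.sin θ2) * (2 * Real.cos ((N : ℝ) * θ2)) : ℝ) : ℂ) := by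
  have hpi := Real.pi_pos
  have hs1 : 0 < Real.sin θ1 := Real.sin_pos_of_pos_of_lt_pi h1 (h12.trans h2)
  have hs2 : 0 < Real.sin θ2 := Real.sin_pos_of_pos_of_lt_pi (h1.trans h12) h2
  have hsm : 0 < Real.sin ((θ2 - θ1)/2) :=
    Real.sin_pos_of_pos_of_lt_pi (by linarith) (by linarith)
  have hsp : 0 < Real.sin ((θ1 + θ2)/2) :=
    Real.sin_pos_of_pos_of_lt_pi (by linarith) (by linarith)
  have e0 : z4 θ1 θ2 0 = Complex.exp (Complex.I * θ1) := rfl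
  have e1 : z4 θ1 θ2 1 = Complex.exp (Complex.I * θ2) := rfl
  have e2 : z4 θ1 θ2 2 = Complex.exp (Complex.I * ((2 * Real.pi - θ2 : ℝ) : ℂ)) := rfl
  have e3 : z4 θ1 θ2 3 = Complex.exp (Complex.I * ((2 * Real.pi - θ1 : ℝ) : ℂ)) := rfl
  have hd01 : ‖z4 θ1 θ2 0 - z4 θ1 θ2 1‖ = 2 * Real.sin ((θ2 - θ1)/2) := by
    rw [e0, e1, FH_abs_exp_sub_exp, show (θ1-θ2)/2 = -((θ2-θ1)/2) by ring, Real.sin_neg, abs_neg,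
      abs_of_pos hsm]
  have hd02 : ‖z4 θ1 θ2 0 - z4 θ1 θ2 2‖ = 2 * Real.sin ((θ1 + θ2)/2) := by
    rw [e0, e2, FH_abs_exp_sub_exp, show (θ1-(2*Real.pi-θ2))/2 = (θ1+θ2)/2 - Real.pi by ring,
      Real.sin_sub_pi, abs_neg, abs_of_pos hsp]
  have hd03 : ‖z4 θ1 θ2 0 - z4 θ1 θ2 3‖ = 2 * Real.sin θ1 := by
    rw [e0, e3, FH_abs_exp_sub_exp, show (θ1-(2*Real.pi-θ1))/2 = θ1 - Real.pi by ring,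
      Real.sin_sub_pi, abs_neg, abs_of_pos hs1]
  have hd12 : ‖z4 θ1 θ2 1 - z4 θ1 θ2 2‖ = 2 * Real.sin θ2 := by
    rw [e1, e2, FH_abs_exp_sub_exp, show (θ2-(2*Real.pi-θ2))/2 = θ2 - Real.pi by ring,
      Real.sin_sub_pi, abs_neg, abs_of_pos hs2]
  have hd13 : ‖z4 θ1 θ2 1 - z4 θ1 θ2 3‖ = 2 * Real.sin ((θ1 + θ2)/2) := by
    rw [e1, e3, FH_abs_exp_sub_exp, show (θ2-(2*Real.pi-θ1))/2 = (θ1+θ2)/2 - Real.pi by ring,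
      Real.sin_sub_pi, abs_neg, abs_of_pos hsp]
  have hd23 : ‖z4 θ1 θ2 2 - z4 θ1 θ2 3‖ = 2 * Real.sin ((θ2 - θ1)/2) := by
    rw [e2, e3, FH_abs_exp_sub_exp, show ((2*Real.pi-θ2)-(2*Real.pi-θ1))/2 = -((θ2-θ1)/2) by ring,
      Real.sin_neg, abs_neg, abs_of_pos hsm]
  -- evaluate the four products
  have hfin : ∀ (v : Fin 4 → Bool),
      (∏ j : Fin 4, ∏ k : Fin 4,
        if j < k then
          ‖z4 θ1 θ2 j - z4 θ1 θ2 k‖ ^ (2 * bhalf (v j) * bhalf (v k))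
        else 1 : ℝ)
      = (‖z4 θ1 θ2 0 - z4 θ1 θ2 1‖ ^ (2 * bhalf (v 0) * bhalf (v 1)))
        * (‖z4 θ1 θ2 0 - z4 θ1 θ2 2‖ ^ (2 * bhalf (v 0) * bhalf (v 2)))
        * (‖z4 θ1 θ2 0 - z4 θ1 θ2 3‖ ^ (2 * bhalf (v 0) * bhalf (v 3)))
        * (‖z4 θ1 θ2 1 - z4 θ1 θ2 2‖ ^ (2 * bhalf (v 1) * bhalf (v 2)))
        * (‖z4 θ1 θ2 1 - z4 θ1 θ2 3‖ ^ (2 * bhalf (v 1) * bhalf (v 3)))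
        * (‖z4 θ1 θ2 2 - z4 θ1 θ2 3‖ ^ (2 * bhalf (v 2) * bhalf (v 3))) := by
    intro v
    simp only [Fin.prod_univ_four,
      show ((0:Fin 4) < 1) = True by decide, show ((0:Fin 4) < 2) = True by decide,
      show ((0:Fin 4) < 3) = True by decide, show ((1:Fin 4) < 2) = True by decide,
      show ((1:Fin 4) < 3) = True by decide, show ((2:Fin 4) < 3) = True by decide,
      show ((1:Fin 4) < 0) = False by decide, show ((2:Fin 4) < 0) = False by decide,
      show ((3:Fin 4) < 0) = False by decide, show ((2:Fin 4) < 1) = False by decide,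
      show ((3:Fin 4) < 1) = False by decide, show ((3:Fin 4) < 2) = False by decide,
      show ((0:Fin 4) < 0) = False by decide, show ((1:Fin 4) < 1) = False by decide,
      show ((2:Fin 4) < 2) = False by decide, show ((3:Fin 4) < 3) = False by decide,
      if_true, if_false]
    ring
  have P0 : (∏ j : Fin 4, ∏ k : Fin 4,
      if j < k then
        ‖z4 θ1 θ2 j - z4 θ1 θ2 k‖
          ^ (2 * bhalf (![false,true,true,true] j) * bhalf (![false,true,true,true] k))
      else 1 : ℝ) = Real.sqrt (Real.sin θ2 / Real.sin θ1) := by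
    rw [hfin, hd01, hd02, hd03, hd12, hd13, hd23]
    norm_num [bhalf, Matrix.cons_val]
    exact FH_prod_case0 hsm hsp hs1 hs2
  have P1 : (∏ j : Fin 4, ∏ k : Fin 4,
      if j < k then
        ‖z4 θ1 θ2 j - z4 θ1 θ2 k‖
          ^ (2 * bhalf (![true,false,true,true] j) * bhalf (![true,false,true,true] k))
      else 1 : ℝ) = Real.sqrt (Real.sin θ1 / Real.sin θ2) := by
    rw [hfin, hd01, hd02, hd03, hd12, hd13, hd23]
    norm_num [bhalf, Matrix.cons_val]
    exact FH_prod_case1 hsm hsp hs1 hs2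
  have P2 : (∏ j : Fin 4, ∏ k : Fin 4,
      if j < k then
        ‖z4 θ1 θ2 j - z4 θ1 θ2 k‖
          ^ (2 * bhalf (![true,true,false,true] j) * bhalf (![true,true,false,true] k))
      else 1 : ℝ) = Real.sqrt (Real.sin θ1 / Real.sin θ2) := by
    rw [hfin, hd01, hd02, hd03, hd12, hd13, hd23]
    norm_num [bhalf, Matrix.cons_val]
    exact FH_prod_case2 hsm hsp hs1 hs2
  have P3 : (∏ j : Fin 4, ∏ k : Fin 4,
      if j < k then
        ‖z4 θ1 θ2 j - z4 θ1 θ2 k‖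
          ^ (2 * bhalf (![true,true,true,false] j) * bhalf (![true,true,true,false] k))
      else 1 : ℝ) = Real.sqrt (Real.sin θ2 / Real.sin θ1) := by
    rw [hfin, hd01, hd02, hd03, hd12, hd13, hd23]
    norm_num [bhalf, Matrix.cons_val]
    exact FH_prod_case3 hsm hsp hs1 hs2
  rw [FH_filter_eq]
  rw [Finset.sum_insert (by simp [FH_funext_fin4]),
    Finset.sum_insert (by simp [FH_funext_fin4]),
    Finset.sum_insert (by simp [FH_funext_fin4]),
    Finset.sum_singleton]
  rw [P0, P1, P2, P3]
  have a0 : Complex.I * (N : ℂ) *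
      ((θ1 * (bhalf (![false,true,true,true] 0) - bhalf (![false,true,true,true] 3))
        + θ2 * (bhalf (![false,true,true,true] 1) - bhalf (![false,true,true,true] 2)) : ℝ) : ℂ)
      = Complex.I * ((-(N * θ1) : ℝ) : ℂ) := by
    norm_num [bhalf, Matrix.cons_val_one, Matrix.cons_val_two, Matrix.cons_val_three, Matrix.vecHead, Matrix.vecTail]; ring
  have a1 : Complex.I * (N : ℂ) *
      ((θ1 * (bhalf (![true,false,true,true] 0) - bhalf (![true,false,true,true] 3))
        + θ2 * (bhalf (![true,false,true,true] 1) - bhalf (![true,false,true,true] 2)) : ℝ) : ℂ)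
      = Complex.I * ((-(N * θ2) : ℝ) : ℂ) := by
    norm_num [bhalf, Matrix.cons_val_one, Matrix.cons_val_two, Matrix.cons_val_three, Matrix.vecHead, Matrix.vecTail]; ring
  have a2 : Complex.I * (N : ℂ) *
      ((θ1 * (bhalf (![true,true,false,true] 0) - bhalf (![true,true,false,true] 3))
        + θ2 * (bhalf (![true,true,false,true] 1) - bhalf (![true,true,false,true] 2)) : ℝ) : ℂ)
      = Complex.I * (((N * θ2) : ℝ) : ℂ) := by
    norm_num [bhalf, Matrix.cons_val_one, Matrix.cons_val_two, Matrix.cons_val_three, Matrix.vecHead, Matrix.vecTail]; ring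
  have a3 : Complex.I * (N : ℂ) *
      ((θ1 * (bhalf (![true,true,true,false] 0) - bhalf (![true,true,true,false] 3))
        + θ2 * (bhalf (![true,true,true,false] 1) - bhalf (![true,true,true,false] 2)) : ℝ) : ℂ)
      = Complex.I * (((N * θ1) : ℝ) : ℂ) := by
    norm_num [bhalf, Matrix.cons_val_one, Matrix.cons_val_two, Matrix.cons_val_three, Matrix.vecHead, Matrix.vecTail]; ring
  rw [a0, a1, a2, a3]
  have c1 := FH_exp_pair ((N : ℝ) * θ1)
  have c2 := FH_exp_pair ((N : ℝ) * θ2)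
  push_cast at c1 c2 ⊢
  linear_combination (Real.sqrt (Real.sin θ2 / Real.sin θ1) : ℂ) * c1
    + (Real.sqrt (Real.sin θ1 / Real.sin θ2) : ℂ) * c2

end
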